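/- Let H be a cosemisimple Hopf algebra, A a braided Hopf algebra in Yetter–Drinfeld modules over H, and K a left coideal subalgebra of A in left H-comodules. Suppose every non-zero Hopf module in the category of left A-comodules, left H-comodules, right K-modules contains a non-zero Hopf submodule that is K-free in left H-comodules. Then every Hopf module in this category is K-free in left H-comodules, i.e. of the form X ⊗ K for some H-subcomodule X via the K-action. -/

import Mathlib

open TensorProduct LinearMap

universe u
set_option maxHeartbeats 1000000

section Prelude

variable (k : Type u) [Field k]

/-- A left comodule structure map over a coalgebra-like datum `(Δ, ε)` on `C`. -/
structure IsComod {C V : Type u} [AddCommGroup C] [Module k C]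
    [AddCommGroup V] [Module k V]
    (ρ : V →ₗ[k] C ⊗[k] V) (Δ : C →ₗ[k] C ⊗[k] C) (ε : C →ₗ[k] k) : Prop where
  counit : (TensorProduct.lid k V).toLinearMap ∘ₗ ε.rTensor V ∘ₗ ρ = LinearMap.id
  coassoc : Δ.rTensor V ∘ₗ ρ
      = (TensorProduct.assoc k C C V).symm.toLinearMap ∘ₗ ρ.lTensor C ∘ₗ ρ

/-- A right comodule structure map. -/
structure IsRightComod {C V : Type u} [AddCommGroup C] [Module k C]
    [AddCommGroup V] [Module k V]
    (ρ : V →ₗ[k] V ⊗[k] C) (Δ : C →ₗ[k] C ⊗[k] C) (ε : C →ₗ[k] k) : Prop where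
  counit : (TensorProduct.rid k V).toLinearMap ∘ₗ ε.lTensor V ∘ₗ ρ = LinearMap.id
  coassoc : Δ.lTensor V ∘ₗ ρ
      = (TensorProduct.assoc k V C C).toLinearMap ∘ₗ ρ.rTensor C ∘ₗ ρ

/-- A right module structure map over an algebra-like datum `(μ, 1)` on `B`. -/
structure IsRightMod {B V : Type u} [AddCommGroup B] [Module k B]
    [AddCommGroup V] [Module k V]
    (σ : V ⊗[k] B →ₗ[k] V) (μ : B ⊗[k] B →ₗ[k] B) (oneB : B) : Prop where
  act_one : ∀ v : V, σ (v ⊗ₜ oneB) = v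
  act_assoc : σ ∘ₗ σ.rTensor B
      = σ ∘ₗ μ.lTensor V ∘ₗ (TensorProduct.assoc k V B B).toLinearMap

/-- Diagonal left `H`-coaction on a tensor product of two `H`-comodules. -/
noncomputable def diagCoact {H V W : Type u} [Ring H] [Algebra k H]
    [AddCommGroup V] [Module k V] [AddCommGroup W] [Module k W]
    (ρV : V →ₗ[k] H ⊗[k] V) (ρW : W →ₗ[k] H ⊗[k] W) :
    V ⊗[k] W →ₗ[k] H ⊗[k] (V ⊗[k] W) :=
  (LinearMap.mul' k H).rTensor (V ⊗[k] W)
    ∘ₗ (tensorTensorTensorComm k H V H W).toLinearMap ∘ₗ map ρV ρW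

/-- A braided Hopf algebra `A` in the Yetter–Drinfeld category over the Hopf algebra `H`,
with all structure maps given explicitly as linear maps. -/
structure BHA (H : Type u) [Ring H] [HopfAlgebra k H]
    (A : Type u) [AddCommGroup A] [Module k A] where
  mul : A ⊗[k] A →ₗ[k] A
  one : A
  comul : A →ₗ[k] A ⊗[k] A
  counit : A →ₗ[k] k
  antipode : A →ₗ[k] A
  coact : A →ₗ[k] H ⊗[k] A
  act : H ⊗[k] A →ₗ[k] A
  -- algebra axioms
  mul_assoc' : mul ∘ₗ mul.rTensor A
      = mul ∘ₗ mul.lTensor A ∘ₗ (TensorProduct.assoc k A A A).toLinearMap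
  one_mul' : ∀ a : A, mul (one ⊗ₜ a) = a
  mul_one' : ∀ a : A, mul (a ⊗ₜ one) = a
  -- coalgebra axioms
  isCoalg : IsComod k comul comul counit  -- encodes coassociativity and left counit axiom
  comul_counit : (TensorProduct.rid k A).toLinearMap ∘ₗ counit.lTensor A ∘ₗ comul
      = LinearMap.id
  -- `H`-comodule axioms
  isComodH : IsComod k coact (Coalgebra.comul (R := k) (A := H)) (Coalgebra.counit (R := k) (A := H))
  -- `H`-module axioms
  act_one' : ∀ a : A, act ((1 : H) ⊗ₜ a) = a
  act_mul' : ∀ (g h : H) (a : A), act ((g * h) ⊗ₜ a) = act (g ⊗ₜ act (h ⊗ₜ a))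
  -- `A` is an `H`-module algebra
  act_alg : act ∘ₗ mul.lTensor H
      = mul ∘ₗ map act act ∘ₗ (tensorTensorTensorComm k H H A A).toLinearMap
          ∘ₗ (Coalgebra.comul (R := k) (A := H)).rTensor (A ⊗[k] A)
  act_unit : ∀ h : H, act (h ⊗ₜ one) = Coalgebra.counit (R := k) h • one
  -- `A` is an `H`-comodule algebra
  coact_mul : coact ∘ₗ mul = mul.lTensor H ∘ₗ diagCoact k coact coact
  coact_one : coact one = 1 ⊗ₜ one
  -- Yetter–Drinfeld compatibility: h⁽¹⁾a₍₋₁₎ ⊗ h⁽²⁾·a₍₀₎ = (h⁽¹⁾·a)₍₋₁₎h⁽²⁾ ⊗ (h⁽¹⁾·a)₍₀₎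
  yd : map (LinearMap.mul' k H) act
        ∘ₗ (tensorTensorTensorComm k H H H A).toLinearMap
        ∘ₗ coact.lTensor (H ⊗[k] H)
        ∘ₗ (Coalgebra.comul (R := k) (A := H)).rTensor A
      = (LinearMap.mul' k H).rTensor A
        ∘ₗ (TensorProduct.assoc k H H A).symm.toLinearMap
        ∘ₗ (TensorProduct.comm k A H).toLinearMap.lTensor H
        ∘ₗ (TensorProduct.assoc k H A H).toLinearMap
        ∘ₗ (coact ∘ₗ act).rTensor H
        ∘ₗ (TensorProduct.assoc k H A H).symm.toLinearMap
        ∘ₗ (TensorProduct.comm k H A).toLinearMap.lTensor H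
        ∘ₗ (TensorProduct.assoc k H H A).toLinearMap
        ∘ₗ (Coalgebra.comul (R := k) (A := H)).rTensor A
  -- the braiding of the Yetter–Drinfeld category on `A ⊗ A`
  braid : A ⊗[k] A →ₗ[k] A ⊗[k] A
  braid_def : braid = act.rTensor A
      ∘ₗ (TensorProduct.assoc k H A A).symm.toLinearMap
      ∘ₗ (TensorProduct.comm k A A).toLinearMap.lTensor H
      ∘ₗ (TensorProduct.assoc k H A A).toLinearMap
      ∘ₗ coact.rTensor A
  -- the braided algebra structure on `A ⊗ A`
  mulAA : (A ⊗[k] A) ⊗[k] (A ⊗[k] A) →ₗ[k] A ⊗[k] A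
  mulAA_def : mulAA = map mul mul
      ∘ₗ (TensorProduct.assoc k A A (A ⊗[k] A)).symm.toLinearMap
      ∘ₗ ((TensorProduct.assoc k A A A).toLinearMap
            ∘ₗ braid.rTensor A
            ∘ₗ (TensorProduct.assoc k A A A).symm.toLinearMap).lTensor A
      ∘ₗ (TensorProduct.assoc k A A (A ⊗[k] A)).toLinearMap
  -- braided bialgebra axioms
  comul_mul : comul ∘ₗ mul = mulAA ∘ₗ map comul comul
  counit_mul : ∀ x y : A, counit (mul (x ⊗ₜ y)) = counit x * counit y
  comul_one : comul one = one ⊗ₜ one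
  counit_one : counit one = 1
  -- antipode axioms
  antipode_left : ∀ a : A, mul (antipode.rTensor A (comul a)) = counit a • one
  antipode_right : ∀ a : A, mul (antipode.lTensor A (comul a)) = counit a • one
  -- the comultiplication and counit of `A` are `H`-colinear
  comul_colinear : diagCoact k coact coact ∘ₗ comul = comul.lTensor H ∘ₗ coact
  counit_colinear : ∀ a : A, counit.lTensor H (coact a) = counit a • ((1 : H) ⊗ₜ (1 : k))

namespace BHA

variable {k} {H A : Type u} [Ring H] [HopfAlgebra k H]
  [AddCommGroup A] [Module k A]

/-- Group-like elements of `A`. -/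
def IsGroupLike (S : BHA k H A) (g : A) : Prop :=
  S.comul g = g ⊗ₜ g ∧ S.counit g = 1

/-- `C` is a subcoalgebra of `A`. -/
def IsSubcoalgebra (S : BHA k H A) (C : Submodule k A) : Prop :=
  ∀ c ∈ C, S.comul c ∈ LinearMap.range (map C.subtype C.subtype)

/-- `C` is a simple subcoalgebra of `A`. -/
def IsSimpleSubcoalgebra (S : BHA k H A) (C : Submodule k A) : Prop :=
  S.IsSubcoalgebra C ∧ C ≠ ⊥ ∧
    ∀ D : Submodule k A, S.IsSubcoalgebra D → D ≤ C → D ≠ ⊥ → D = C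

/-- `A` is pointed: all its simple subcoalgebras are one-dimensional. -/
def IsPointed (S : BHA k H A) : Prop :=
  ∀ C : Submodule k A, S.IsSimpleSubcoalgebra C → Module.finrank k C = 1

/-- `K` is a left coideal subalgebra of `A` in the category of left `H`-comodules. -/
def IsLeftCoidealSubalgebra (S : BHA k H A) (K : Submodule k A) : Prop :=
  S.one ∈ K ∧ (∀ x ∈ K, ∀ y ∈ K, S.mul (x ⊗ₜ y) ∈ K) ∧
    (∀ x ∈ K, S.comul x ∈ LinearMap.range (K.subtype.lTensor A)) ∧
    (∀ x ∈ K, S.coact x ∈ LinearMap.range (K.subtype.lTensor H))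

end BHA

end Prelude
section Prelude2

variable (k : Type u) [Field k]

/-- `W` is a subcomodule for the coaction `ρ`. -/
def IsSubcomod {C V : Type u} [AddCommGroup C] [Module k C] [AddCommGroup V] [Module k V]
    (ρ : V →ₗ[k] C ⊗[k] V) (W : Submodule k V) : Prop :=
  ∀ w ∈ W, ρ w ∈ LinearMap.range (W.subtype.lTensor C)

/-- A coalgebra-datum `(Δ, ε)` is cosemisimple if every subcomodule of every comodule
admits a complementary subcomodule. -/
def CosemisimpleCoalg {C : Type u} [AddCommGroup C] [Module k C]
    (Δ : C →ₗ[k] C ⊗[k] C) (ε : C →ₗ[k] k) : Prop :=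
  ∀ (V : Type u) [AddCommGroup V] [Module k V] (ρ : V →ₗ[k] C ⊗[k] V),
    IsComod k ρ Δ ε → ∀ W : Submodule k V, IsSubcomod k ρ W →
      ∃ W' : Submodule k V, IsCompl W W' ∧ IsSubcomod k ρ W'

/-- The half-braided diagonal right action of `K'` on `A ⊗ X`:
`(a ⊗ x) · c = a (x₍₋₁₎ · c⁽¹⁾) ⊗ x₍₀₎ · c⁽²⁾`. -/
noncomputable def halfBraidedAction {H A X K' : Type u} [Ring H] [Algebra k H]
    [AddCommGroup A] [Module k A] [AddCommGroup X] [Module k X]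
    [AddCommGroup K'] [Module k K']
    (mulA : A ⊗[k] A →ₗ[k] A) (act : H ⊗[k] A →ₗ[k] A)
    (ρX : X →ₗ[k] H ⊗[k] X) (σX : X ⊗[k] K' →ₗ[k] X)
    (comulK : K' →ₗ[k] A ⊗[k] K') :
    (A ⊗[k] X) ⊗[k] K' →ₗ[k] A ⊗[k] X :=
  map (mulA ∘ₗ act.lTensor A ∘ₗ (TensorProduct.assoc k A H A).toLinearMap) σX
    ∘ₗ (tensorTensorTensorComm k (A ⊗[k] H) X A K').toLinearMap
    ∘ₗ ((TensorProduct.assoc k A H X).symm.toLinearMap ∘ₗ ρX.lTensor A).rTensor (A ⊗[k] K')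
    ∘ₗ comulK.lTensor (A ⊗[k] X)

/-- The half-braided diagonal left `A`-coaction on `U ⊗ K'`:
`u ⊗ c ↦ u⁽⁻¹⁾ (u⁽⁰⁾₍₋₁₎ · c⁽¹⁾) ⊗ u⁽⁰⁾₍₀₎ ⊗ c⁽²⁾`. -/
noncomputable def halfBraidedCoact {H A U K' : Type u} [Ring H] [Algebra k H]
    [AddCommGroup A] [Module k A] [AddCommGroup U] [Module k U]
    [AddCommGroup K'] [Module k K']
    (mulA : A ⊗[k] A →ₗ[k] A) (act : H ⊗[k] A →ₗ[k] A)
    (ρAU : U →ₗ[k] A ⊗[k] U) (ρHU : U →ₗ[k] H ⊗[k] U)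
    (comulK : K' →ₗ[k] A ⊗[k] K') :
    U ⊗[k] K' →ₗ[k] A ⊗[k] (U ⊗[k] K') :=
  map (mulA ∘ₗ act.lTensor A ∘ₗ (TensorProduct.assoc k A H A).toLinearMap) LinearMap.id
    ∘ₗ (tensorTensorTensorComm k (A ⊗[k] H) U A K').toLinearMap
    ∘ₗ ((TensorProduct.assoc k A H U).symm.toLinearMap ∘ₗ ρHU.lTensor A).rTensor (A ⊗[k] K')
    ∘ₗ map ρAU comulK

namespace BHA

variable {k} {H A : Type u} [Ring H] [HopfAlgebra k H] [AddCommGroup A] [Module k A]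

/-- `comulK` is the restriction of the comultiplication of `A` to the left coideal `K`. -/
def RestrictsComul (S : BHA k H A) (K : Submodule k A)
    (comulK : ↥K →ₗ[k] A ⊗[k] ↥K) : Prop :=
  K.subtype.lTensor A ∘ₗ comulK = S.comul ∘ₗ K.subtype

/-- `coactK` is the restriction of the `H`-coaction of `A` to `K`. -/
def RestrictsCoact (S : BHA k H A) (K : Submodule k A)
    (coactK : ↥K →ₗ[k] H ⊗[k] ↥K) : Prop :=
  K.subtype.lTensor H ∘ₗ coactK = S.coact ∘ₗ K.subtype

/-- `mulK` is the restriction of the multiplication of `A` to the subalgebra `K`. -/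
def RestrictsMul (S : BHA k H A) (K : Submodule k A)
    (mulK : ↥K ⊗[k] ↥K →ₗ[k] ↥K) : Prop :=
  K.subtype ∘ₗ mulK = S.mul ∘ₗ map K.subtype K.subtype

variable (S : BHA k H A) (K : Submodule k A)

/-- A (left-right) Hopf module in `^A(^H 𝓜)_K`: a left `H`-comodule `V` with a
left `A`-coaction and a right `K`-action, all `H`-colinear, such that the `A`-coaction
is right `K`-linear for the half-braided diagonal `K`-action on `A ⊗ V`. -/
structure IsHopfModule (mulK : ↥K ⊗[k] ↥K →ₗ[k] ↥K) (oneK : ↥K)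
    (comulK : ↥K →ₗ[k] A ⊗[k] ↥K) (coactK : ↥K →ₗ[k] H ⊗[k] ↥K)
    {V : Type u} [AddCommGroup V] [Module k V]
    (ρH : V →ₗ[k] H ⊗[k] V) (ρA : V →ₗ[k] A ⊗[k] V)
    (σ : V ⊗[k] ↥K →ₗ[k] V) : Prop where
  comodH : IsComod k ρH (Coalgebra.comul (R := k) (A := H)) (Coalgebra.counit (R := k) (A := H))
  comodA : IsComod k ρA S.comul S.counit
  modK : IsRightMod k σ mulK oneK
  colinearA : diagCoact k S.coact ρH ∘ₗ ρA = ρA.lTensor H ∘ₗ ρH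
  colinearK : ρH ∘ₗ σ = σ.lTensor H ∘ₗ diagCoact k ρH coactK
  Klinear : ρA ∘ₗ σ = halfBraidedAction k S.mul S.act ρH σ comulK ∘ₗ ρA.rTensor ↥K

/-- `V` (with right `K`-action `σ` and `H`-coaction `ρH`) is `K`-free in the category of
left `H`-comodules: it is freely generated as a `K`-module by an `H`-subcomodule. -/
def IsKFree {V : Type u} [AddCommGroup V] [Module k V]
    (ρH : V →ₗ[k] H ⊗[k] V) (σ : V ⊗[k] ↥K →ₗ[k] V) : Prop :=
  ∃ X : Submodule k V, IsSubcomod k ρH X ∧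
    Function.Bijective (σ ∘ₗ X.subtype.rTensor ↥K)

end BHA

end Prelude2

section Aux1
variable {k : Type u} [Field k]
variable {M N P Q M' N' P' Q' : Type u}
variable [AddCommGroup M] [Module k M] [AddCommGroup N] [Module k N]
variable [AddCommGroup P] [Module k P] [AddCommGroup Q] [Module k Q]
variable [AddCommGroup M'] [Module k M'] [AddCommGroup N'] [Module k N']
variable [AddCommGroup P'] [Module k P'] [AddCommGroup Q'] [Module k Q']

lemma aux_swap (f : M →ₗ[k] M') (g : N →ₗ[k] N') :
    f.rTensor N' ∘ₗ g.lTensor M = g.lTensor M' ∘ₗ f.rTensor N := by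
  rw [rTensor_comp_lTensor, lTensor_comp_rTensor]

lemma aux_lid_natural (f : M →ₗ[k] M') :
    (TensorProduct.lid k M').toLinearMap ∘ₗ f.lTensor k
      = f ∘ₗ (TensorProduct.lid k M).toLinearMap := by
  apply TensorProduct.ext'
  intro a m
  simp

lemma aux_ttt_natural (f₁ : M →ₗ[k] M') (f₂ : N →ₗ[k] N') (f₃ : P →ₗ[k] P') (f₄ : Q →ₗ[k] Q') :
    (tensorTensorTensorComm k M' N' P' Q').toLinearMap ∘ₗ map (map f₁ f₂) (map f₃ f₄)
      = map (map f₁ f₃) (map f₂ f₄) ∘ₗ (tensorTensorTensorComm k M N P Q).toLinearMap := by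
  apply TensorProduct.ext_fourfold'
  intro w x y z
  simp

lemma aux_lT_inj {V : Type u} [AddCommGroup V] [Module k V] (W : Submodule k V)
    (C : Type u) [AddCommGroup C] [Module k C] :
    Function.Injective (W.subtype.lTensor C) :=
  Module.Flat.lTensor_preserves_injective_linearMap _ W.injective_subtype

lemma aux_range_lT_le {V : Type u} [AddCommGroup V] [Module k V]
    (f : M →ₗ[k] V) (W : Submodule k V) (h : ∀ x, f x ∈ W)
    (C : Type u) [AddCommGroup C] [Module k C] :
    range (f.lTensor C) ≤ range (W.subtype.lTensor C) := by
  have hf : f = W.subtype ∘ₗ (f.codRestrict W h) := by ext x; rfl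
  rw [hf, lTensor_comp]
  exact range_comp_le_range _ _

lemma aux_range_lT_mono {V : Type u} [AddCommGroup V] [Module k V]
    {W W' : Submodule k V} (h : W ≤ W')
    (C : Type u) [AddCommGroup C] [Module k C] :
    range (W.subtype.lTensor C) ≤ range (W'.subtype.lTensor C) :=
  aux_range_lT_le W.subtype W' (fun x => h x.2) C

lemma aux_range_rT_le {V : Type u} [AddCommGroup V] [Module k V]
    (f : M →ₗ[k] V) (W : Submodule k V) (h : ∀ x, f x ∈ W)
    (C : Type u) [AddCommGroup C] [Module k C] :
    range (f.rTensor C) ≤ range (W.subtype.rTensor C) := by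
  have hf : f = W.subtype ∘ₗ (f.codRestrict W h) := by ext x; rfl
  rw [hf, rTensor_comp]
  exact range_comp_le_range _ _

end Aux1
section Aux2
variable {k : Type u} [Field k]
variable {C V Q₀ : Type u}
variable [AddCommGroup C] [Module k C] [AddCommGroup V] [Module k V]
variable [AddCommGroup Q₀] [Module k Q₀]

lemma aux_isSubcomod_bot (ρ : V →ₗ[k] C ⊗[k] V) : IsSubcomod k ρ (⊥ : Submodule k V) := by
  intro w hw
  rw [Submodule.mem_bot] at hw
  subst hw
  rw [map_zero]
  exact Submodule.zero_mem _

lemma aux_isSubcomod_sup {ρ : V →ₗ[k] C ⊗[k] V} {P P' : Submodule k V}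
    (h : IsSubcomod k ρ P) (h' : IsSubcomod k ρ P') : IsSubcomod k ρ (P ⊔ P') := by
  intro w hw
  rcases Submodule.mem_sup.1 hw with ⟨x, hx, y, hy, rfl⟩
  rw [map_add]
  exact Submodule.add_mem _ (aux_range_lT_mono le_sup_left C (h x hx))
    (aux_range_lT_mono le_sup_right C (h' y hy))

/-- Restriction of a coaction to a subcomodule. -/
noncomputable def auxRestrict (ρ : V →ₗ[k] C ⊗[k] V) (P : Submodule k V)
    (h : IsSubcomod k ρ P) : ↥P →ₗ[k] C ⊗[k] ↥P :=
  (LinearEquiv.ofInjective (P.subtype.lTensor C) (aux_lT_inj P C)).symm.toLinearMap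
    ∘ₗ (ρ ∘ₗ P.subtype).codRestrict (range (P.subtype.lTensor C)) (fun p => h p p.2)

lemma auxRestrict_spec (ρ : V →ₗ[k] C ⊗[k] V) (P : Submodule k V) (h : IsSubcomod k ρ P) :
    P.subtype.lTensor C ∘ₗ auxRestrict ρ P h = ρ ∘ₗ P.subtype := by
  ext p
  simp only [auxRestrict, coe_comp, Function.comp_apply, LinearEquiv.coe_coe]
  have : ∀ y : range (P.subtype.lTensor C),
      (P.subtype.lTensor C) ((LinearEquiv.ofInjective (P.subtype.lTensor C)
        (aux_lT_inj P C)).symm y) = ↑y := by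
    intro y
    conv_rhs => rw [← (LinearEquiv.ofInjective (P.subtype.lTensor C)
      (aux_lT_inj P C)).apply_symm_apply y]
    rfl
  rw [this]
  rfl

lemma aux_isSubcomod_comap {π : V →ₗ[k] Q₀} {ρV : V →ₗ[k] C ⊗[k] V} {ρQ : Q₀ →ₗ[k] C ⊗[k] Q₀}
    (hcomm : ρQ ∘ₗ π = π.lTensor C ∘ₗ ρV) {W₁ : Submodule k Q₀}
    (h₁ : IsSubcomod k ρQ W₁) : IsSubcomod k ρV (W₁.comap π) := by
  intro v hv
  set P := W₁.comap π with hP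
  have hle : P ≤ ker (W₁.mkQ ∘ₗ π) := by
    intro x hx
    simp only [mem_ker, coe_comp, Function.comp_apply, Submodule.mkQ_apply,
      Submodule.Quotient.mk_eq_zero]
    exact hx
  set pbar : (V ⧸ P) →ₗ[k] Q₀ ⧸ W₁ := P.liftQ (W₁.mkQ ∘ₗ π) hle with hpbar
  have hker : ker (W₁.mkQ ∘ₗ π) ≤ P := by
    intro x hx
    simp only [mem_ker, coe_comp, Function.comp_apply, Submodule.mkQ_apply,
      Submodule.Quotient.mk_eq_zero] at hx
    exact hx
  have hinj : Function.Injective pbar := by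
    rw [← ker_eq_bot, hpbar, Submodule.ker_liftQ_eq_bot]
    exact hker
  have hinj2 : Function.Injective (pbar.lTensor C) :=
    Module.Flat.lTensor_preserves_injective_linearMap _ hinj
  have key : (P.mkQ.lTensor C) (ρV v) = 0 := by
    apply hinj2
    rw [map_zero, ← comp_apply, ← lTensor_comp]
    have : pbar ∘ₗ P.mkQ = W₁.mkQ ∘ₗ π := P.liftQ_mkQ _ _
    rw [this, lTensor_comp, comp_apply, ← comp_apply (π.lTensor C), ← hcomm]
    have hmem : ρQ (π v) ∈ range (W₁.subtype.lTensor C) := h₁ (π v) hv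
    rw [← lTensor_mkQ] at hmem
    exact hmem
  have : ρV v ∈ ker (P.mkQ.lTensor C) := key
  rw [lTensor_mkQ] at this
  exact this

lemma aux_isSubcomod_map_subtype {ρ : V →ₗ[k] C ⊗[k] V} {P : Submodule k V}
    (hP : IsSubcomod k ρ P) {C' : Submodule k ↥P}
    (hC' : IsSubcomod k (auxRestrict ρ P hP) C') :
    IsSubcomod k ρ (C'.map P.subtype) := by
  rintro x ⟨c', hc', rfl⟩
  have h1 : ρ (P.subtype c') = (P.subtype.lTensor C) ((auxRestrict ρ P hP) c') := by
    rw [← comp_apply (P.subtype.lTensor C), auxRestrict_spec, comp_apply]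
  rw [h1]
  rcases hC' c' hc' with ⟨t, ht⟩
  rw [← ht, ← comp_apply, ← lTensor_comp]
  have : ∀ y, (P.subtype ∘ₗ C'.subtype) y ∈ C'.map P.subtype := by
    intro y
    exact ⟨↑y, y.2, rfl⟩
  exact aux_range_lT_le _ _ this C ⟨t, rfl⟩

lemma aux_tensor_bot_eq_zero {W : Type u} [AddCommGroup W] [Module k W]
    (t : (↥(⊥ : Submodule k V)) ⊗[k] W) : t = 0 := by
  have h : (LinearMap.id : ↥(⊥ : Submodule k V) →ₗ[k] _) = 0 :=
    LinearMap.ext fun x => by simp [Subsingleton.elim x 0]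
  calc t = (LinearMap.id (R := k)).rTensor W t := by rw [rTensor_id]; rfl
    _ = 0 := by rw [h, rTensor_zero]; rfl
end Aux2
section Aux3
variable {k : Type u} [Field k]
variable {C V : Type u}
variable [AddCommGroup C] [Module k C] [AddCommGroup V] [Module k V]

lemma aux_isComod_restrict {Δ : C →ₗ[k] C ⊗[k] C} {ε : C →ₗ[k] k}
    {ρ : V →ₗ[k] C ⊗[k] V} (hc : IsComod k ρ Δ ε) (P : Submodule k V)
    (hP : IsSubcomod k ρ P) : IsComod k (auxRestrict ρ P hP) Δ ε := by
  have spec : P.subtype.lTensor C ∘ₗ auxRestrict ρ P hP = ρ ∘ₗ P.subtype :=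
    auxRestrict_spec ρ P hP
  set ι := P.subtype with hι
  set ρP := auxRestrict ρ P hP with hρP
  constructor
  · rw [← LinearMap.cancel_left P.injective_subtype]
    calc ι ∘ₗ ((TensorProduct.lid k ↥P).toLinearMap ∘ₗ ε.rTensor ↥P ∘ₗ ρP)
        = (ι ∘ₗ (TensorProduct.lid k ↥P).toLinearMap) ∘ₗ (ε.rTensor ↥P ∘ₗ ρP) := by
          simp only [comp_assoc]
      _ = ((TensorProduct.lid k V).toLinearMap ∘ₗ ι.lTensor k) ∘ₗ (ε.rTensor ↥P ∘ₗ ρP) := by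
          rw [aux_lid_natural ι]
      _ = (TensorProduct.lid k V).toLinearMap ∘ₗ (ι.lTensor k ∘ₗ ε.rTensor ↥P) ∘ₗ ρP := by
          simp only [comp_assoc]
      _ = (TensorProduct.lid k V).toLinearMap ∘ₗ (ε.rTensor V ∘ₗ ι.lTensor C) ∘ₗ ρP := by
          rw [aux_swap ε ι]
      _ = (TensorProduct.lid k V).toLinearMap ∘ₗ ε.rTensor V ∘ₗ (ι.lTensor C ∘ₗ ρP) := by
          simp only [comp_assoc]
      _ = ((TensorProduct.lid k V).toLinearMap ∘ₗ ε.rTensor V ∘ₗ ρ) ∘ₗ ι := by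
          rw [spec]; simp only [comp_assoc]
      _ = ι ∘ₗ LinearMap.id := by rw [hc.counit]; rw [id_comp, comp_id]
  · rw [← LinearMap.cancel_left (aux_lT_inj P (C ⊗[k] C))]
    have e1 : ι.lTensor (C ⊗[k] C) ∘ₗ (TensorProduct.assoc k C C ↥P).symm.toLinearMap
        = (TensorProduct.assoc k C C V).symm.toLinearMap ∘ₗ (ι.lTensor C).lTensor C := by
      have := TensorProduct.map_map_comp_assoc_symm_eq (R := k)
        (LinearMap.id : C →ₗ[k] C) (LinearMap.id : C →ₗ[k] C) ι
      rw [TensorProduct.map_id] at this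
      exact this
    calc ι.lTensor (C ⊗[k] C) ∘ₗ (Δ.rTensor ↥P ∘ₗ ρP)
        = (ι.lTensor (C ⊗[k] C) ∘ₗ Δ.rTensor ↥P) ∘ₗ ρP := by simp only [comp_assoc]
      _ = (Δ.rTensor V ∘ₗ ι.lTensor C) ∘ₗ ρP := by rw [aux_swap Δ ι]
      _ = Δ.rTensor V ∘ₗ (ι.lTensor C ∘ₗ ρP) := by simp only [comp_assoc]
      _ = (Δ.rTensor V ∘ₗ ρ) ∘ₗ ι := by rw [spec]; simp only [comp_assoc]
      _ = ((TensorProduct.assoc k C C V).symm.toLinearMap ∘ₗ ρ.lTensor C ∘ₗ ρ) ∘ₗ ι := by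
          rw [hc.coassoc]
      _ = (TensorProduct.assoc k C C V).symm.toLinearMap ∘ₗ (ρ.lTensor C ∘ₗ (ρ ∘ₗ ι)) := by
          simp only [comp_assoc]
      _ = (TensorProduct.assoc k C C V).symm.toLinearMap ∘ₗ (ρ.lTensor C ∘ₗ (ι.lTensor C ∘ₗ ρP)) := by
          rw [spec]
      _ = (TensorProduct.assoc k C C V).symm.toLinearMap ∘ₗ (((ρ ∘ₗ ι).lTensor C) ∘ₗ ρP) := by
          rw [lTensor_comp]; simp only [comp_assoc]
      _ = (TensorProduct.assoc k C C V).symm.toLinearMap ∘ₗ (((ι.lTensor C ∘ₗ ρP).lTensor C) ∘ₗ ρP) := by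
          rw [spec]
      _ = ((TensorProduct.assoc k C C V).symm.toLinearMap ∘ₗ (ι.lTensor C).lTensor C) ∘ₗ (ρP.lTensor C ∘ₗ ρP) := by
          rw [lTensor_comp]; simp only [comp_assoc]
      _ = ι.lTensor (C ⊗[k] C) ∘ₗ ((TensorProduct.assoc k C C ↥P).symm.toLinearMap ∘ₗ ρP.lTensor C ∘ₗ ρP) := by
          rw [← e1]; simp only [comp_assoc]
end Aux3
section Aux4
variable {k : Type u} [Field k]

lemma aux_diag_natural {H V W V₂ W₂ : Type u} [Ring H] [Algebra k H]
    [AddCommGroup V] [Module k V] [AddCommGroup W] [Module k W]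
    [AddCommGroup V₂] [Module k V₂] [AddCommGroup W₂] [Module k W₂]
    (ρV : V →ₗ[k] H ⊗[k] V) (ρW : W →ₗ[k] H ⊗[k] W)
    (ρV₂ : V₂ →ₗ[k] H ⊗[k] V₂) (ρW₂ : W₂ →ₗ[k] H ⊗[k] W₂)
    (f : V →ₗ[k] V₂) (g : W →ₗ[k] W₂)
    (hf : ρV₂ ∘ₗ f = f.lTensor H ∘ₗ ρV) (hg : ρW₂ ∘ₗ g = g.lTensor H ∘ₗ ρW) :
    diagCoact k ρV₂ ρW₂ ∘ₗ map f g = (map f g).lTensor H ∘ₗ diagCoact k ρV ρW := by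
  have key : (LinearMap.mul' k H).rTensor (V₂ ⊗[k] W₂)
        ∘ₗ ((tensorTensorTensorComm k H V₂ H W₂).toLinearMap
        ∘ₗ map (f.lTensor H) (g.lTensor H))
      = ((map f g).lTensor H
        ∘ₗ (LinearMap.mul' k H).rTensor (V ⊗[k] W))
        ∘ₗ (tensorTensorTensorComm k H V H W).toLinearMap := by
    apply TensorProduct.ext_fourfold'
    intro h v h' w
    simp [mul'_apply]
  unfold diagCoact
  simp only [comp_assoc]
  rw [← TensorProduct.map_comp, hf, hg, TensorProduct.map_comp]
  have key2 := congrArg (fun F => F ∘ₗ map ρV ρW) key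
  simp only [comp_assoc] at key2
  exact key2
end Aux4
section Aux5
variable {k : Type u} [Field k]

lemma aux_hba_natural {H A X X₂ K' : Type u} [Ring H] [Algebra k H]
    [AddCommGroup A] [Module k A] [AddCommGroup X] [Module k X]
    [AddCommGroup X₂] [Module k X₂] [AddCommGroup K'] [Module k K']
    (mulA : A ⊗[k] A →ₗ[k] A) (act : H ⊗[k] A →ₗ[k] A)
    (comulK : K' →ₗ[k] A ⊗[k] K')
    (ρ : X →ₗ[k] H ⊗[k] X) (ρ₂ : X₂ →ₗ[k] H ⊗[k] X₂)
    (σ : X ⊗[k] K' →ₗ[k] X) (σ₂ : X₂ ⊗[k] K' →ₗ[k] X₂)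
    (f : X →ₗ[k] X₂)
    (hρ : ρ₂ ∘ₗ f = f.lTensor H ∘ₗ ρ)
    (hσ : σ₂ ∘ₗ f.rTensor K' = f ∘ₗ σ) :
    halfBraidedAction k mulA act ρ₂ σ₂ comulK ∘ₗ (f.lTensor A).rTensor K'
      = f.lTensor A ∘ₗ halfBraidedAction k mulA act ρ σ comulK := by
  have hσ' : ∀ (x : X) (c : K'), σ₂ (f x ⊗ₜ c) = f (σ (x ⊗ₜ c)) := by
    intro x c
    have := LinearMap.congr_fun hσ (x ⊗ₜ c)
    simpa using this
  set M := mulA ∘ₗ act.lTensor A ∘ₗ (TensorProduct.assoc k A H A).toLinearMap with hM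
  have h1 : comulK.lTensor (A ⊗[k] X₂) ∘ₗ (f.lTensor A).rTensor K'
      = (f.lTensor A).rTensor (A ⊗[k] K') ∘ₗ comulK.lTensor (A ⊗[k] X) :=
    (aux_swap (f.lTensor A) comulK).symm
  have h2 : (((TensorProduct.assoc k A H X₂).symm.toLinearMap ∘ₗ ρ₂.lTensor A).rTensor (A ⊗[k] K'))
        ∘ₗ (f.lTensor A).rTensor (A ⊗[k] K')
      = (((TensorProduct.assoc k A H X₂).symm.toLinearMap ∘ₗ (f.lTensor H).lTensor A).rTensor (A ⊗[k] K'))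
        ∘ₗ (ρ.lTensor A).rTensor (A ⊗[k] K') := by
    rw [← rTensor_comp, ← rTensor_comp]
    congr 1
    simp only [comp_assoc]
    rw [← lTensor_comp, hρ, lTensor_comp]
  have h3 : map M σ₂ ∘ₗ ((tensorTensorTensorComm k (A ⊗[k] H) X₂ A K').toLinearMap
        ∘ₗ (((TensorProduct.assoc k A H X₂).symm.toLinearMap ∘ₗ (f.lTensor H).lTensor A).rTensor (A ⊗[k] K')))
      = f.lTensor A ∘ₗ (map M σ ∘ₗ ((tensorTensorTensorComm k (A ⊗[k] H) X A K').toLinearMap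
        ∘ₗ ((TensorProduct.assoc k A H X).symm.toLinearMap.rTensor (A ⊗[k] K')))) := by
    ext a h x b c
    simp [hσ']
  unfold halfBraidedAction
  simp only [comp_assoc]
  rw [h1]
  have h2' := congrArg (fun F => F ∘ₗ comulK.lTensor (A ⊗[k] X)) h2
  simp only [comp_assoc] at h2'
  rw [h2']
  have h3' := congrArg (fun F => F ∘ₗ ((ρ.lTensor A).rTensor (A ⊗[k] K')
    ∘ₗ comulK.lTensor (A ⊗[k] X))) h3
  simp only [comp_assoc] at h3'
  rw [h3']
  have hR : ((TensorProduct.assoc k A H X).symm.toLinearMap ∘ₗ ρ.lTensor A).rTensor (A ⊗[k] K')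
      = (TensorProduct.assoc k A H X).symm.toLinearMap.rTensor (A ⊗[k] K')
        ∘ₗ (ρ.lTensor A).rTensor (A ⊗[k] K') := rTensor_comp _ _ _
  rw [hR]
  simp only [comp_assoc]
  rfl
end Aux5
section Aux6
variable {k : Type u} [Field k]

lemma aux_isComod_pushforward {C V Q : Type u}
    [AddCommGroup C] [Module k C] [AddCommGroup V] [Module k V]
    [AddCommGroup Q] [Module k Q]
    {Δ : C →ₗ[k] C ⊗[k] C} {ε : C →ₗ[k] k}
    {ρ : V →ₗ[k] C ⊗[k] V} (hc : IsComod k ρ Δ ε)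
    {ρ' : Q →ₗ[k] C ⊗[k] Q} {π : V →ₗ[k] Q}
    (hπ : Function.Surjective π) (E : ρ' ∘ₗ π = π.lTensor C ∘ₗ ρ) :
    IsComod k ρ' Δ ε := by
  constructor
  · rw [← LinearMap.cancel_right hπ]
    simp only [comp_assoc]
    rw [E]
    have s1 := congrArg (fun F => F ∘ₗ ρ) (aux_swap ε π)
    simp only [comp_assoc] at s1
    rw [s1]
    have s2 := congrArg (fun F => F ∘ₗ (ε.rTensor V ∘ₗ ρ)) (aux_lid_natural π)
    simp only [comp_assoc] at s2
    rw [s2]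
    have s3 := congrArg (fun F => π ∘ₗ F) hc.counit
    rw [s3]
    rw [id_comp, comp_id]
  · rw [← LinearMap.cancel_right hπ]
    simp only [comp_assoc]
    rw [E]
    have s1 := congrArg (fun F => F ∘ₗ ρ) (aux_swap Δ π)
    simp only [comp_assoc] at s1
    rw [s1]
    have s2 := congrArg (fun F => π.lTensor (C ⊗[k] C) ∘ₗ F) hc.coassoc
    rw [s2]
    have s3 : ρ'.lTensor C ∘ₗ π.lTensor C = (π.lTensor C).lTensor C ∘ₗ ρ.lTensor C := by
      rw [← lTensor_comp, E, lTensor_comp]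
    have s3' := congrArg (fun F => F ∘ₗ ρ) s3
    simp only [comp_assoc] at s3'
    rw [s3']
    have s4 : π.lTensor (C ⊗[k] C) ∘ₗ (TensorProduct.assoc k C C V).symm.toLinearMap
        = (TensorProduct.assoc k C C Q).symm.toLinearMap ∘ₗ (π.lTensor C).lTensor C := by
      have := TensorProduct.map_map_comp_assoc_symm_eq (R := k)
        (LinearMap.id : C →ₗ[k] C) (LinearMap.id : C →ₗ[k] C) π
      rw [TensorProduct.map_id] at this
      exact this
    have s4' := congrArg (fun F => F ∘ₗ (ρ.lTensor C ∘ₗ ρ)) s4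
    simp only [comp_assoc] at s4'
    rw [s4']
end Aux6
section Aux7

lemma aux_quotient_hopf
    {k H A : Type u} [Field k] [Ring H] [HopfAlgebra k H]
    [AddCommGroup A] [Module k A] (S : BHA k H A) (K : Submodule k A)
    (mulK : ↥K ⊗[k] ↥K →ₗ[k] ↥K) (oneK : ↥K)
    (comulK : ↥K →ₗ[k] A ⊗[k] ↥K) (coactK : ↥K →ₗ[k] H ⊗[k] ↥K)
    {V : Type u} [AddCommGroup V] [Module k V]
    (ρH : V →ₗ[k] H ⊗[k] V) (ρA : V →ₗ[k] A ⊗[k] V) (σ : V ⊗[k] ↥K →ₗ[k] V)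
    (hm : S.IsHopfModule K mulK oneK comulK coactK ρH ρA σ)
    (W : Submodule k V) (hWH : IsSubcomod k ρH W) (hWA : IsSubcomod k ρA W)
    (hWK : ∀ w ∈ W, ∀ c : ↥K, σ (w ⊗ₜ c) ∈ W) :
    ∃ (ρH' : V ⧸ W →ₗ[k] H ⊗[k] (V ⧸ W)) (ρA' : V ⧸ W →ₗ[k] A ⊗[k] (V ⧸ W))
      (σ' : (V ⧸ W) ⊗[k] ↥K →ₗ[k] V ⧸ W),
      S.IsHopfModule K mulK oneK comulK coactK ρH' ρA' σ' ∧
      ρH' ∘ₗ W.mkQ = W.mkQ.lTensor H ∘ₗ ρH ∧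
      ρA' ∘ₗ W.mkQ = W.mkQ.lTensor A ∘ₗ ρA ∧
      σ' ∘ₗ W.mkQ.rTensor ↥K = W.mkQ ∘ₗ σ := by
  set π := W.mkQ with hπdef
  have hπs : Function.Surjective π := Submodule.mkQ_surjective W
  have hπrs : Function.Surjective (π.rTensor ↥K) := LinearMap.rTensor_surjective ↥K hπs
  -- the H-coaction on the quotient
  have hkerH : W ≤ ker (π.lTensor H ∘ₗ ρH) := by
    intro w hw
    have : ρH w ∈ ker (π.lTensor H) := by rw [hπdef, lTensor_mkQ]; exact hWH w hw
    simpa using this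
  set ρH' : V ⧸ W →ₗ[k] H ⊗[k] (V ⧸ W) := W.liftQ (π.lTensor H ∘ₗ ρH) hkerH with hρH'
  have EH : ρH' ∘ₗ π = π.lTensor H ∘ₗ ρH := W.liftQ_mkQ _ _
  -- the A-coaction on the quotient
  have hkerA : W ≤ ker (π.lTensor A ∘ₗ ρA) := by
    intro w hw
    have : ρA w ∈ ker (π.lTensor A) := by rw [hπdef, lTensor_mkQ]; exact hWA w hw
    simpa using this
  set ρA' : V ⧸ W →ₗ[k] A ⊗[k] (V ⧸ W) := W.liftQ (π.lTensor A ∘ₗ ρA) hkerA with hρA'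
  have EA : ρA' ∘ₗ π = π.lTensor A ∘ₗ ρA := W.liftQ_mkQ _ _
  -- the K-action on the quotient
  have hkerK : W ≤ ker (TensorProduct.curry (π ∘ₗ σ)) := by
    intro w hw
    rw [mem_ker]
    ext c
    simp only [TensorProduct.curry_apply, coe_comp, Function.comp_apply, LinearMap.zero_apply]
    rw [hπdef, Submodule.mkQ_apply, Submodule.Quotient.mk_eq_zero]
    exact hWK w hw c
  set σ' : (V ⧸ W) ⊗[k] ↥K →ₗ[k] V ⧸ W :=
    TensorProduct.lift (W.liftQ (TensorProduct.curry (π ∘ₗ σ)) hkerK) with hσ'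
  have EK : σ' ∘ₗ π.rTensor ↥K = π ∘ₗ σ := by
    apply TensorProduct.ext'
    intro v c
    simp [σ', hπdef]
  have EKpt : ∀ (v : V) (c : ↥K), σ' (π v ⊗ₜ c) = π (σ (v ⊗ₜ c)) := by
    intro v c
    have := LinearMap.congr_fun EK (v ⊗ₜ c)
    simpa using this
  refine ⟨ρH', ρA', σ', ⟨?_, ?_, ⟨?_, ?_⟩, ?_, ?_, ?_⟩, EH, EA, EK⟩
  · exact aux_isComod_pushforward hm.comodH hπs EH
  · exact aux_isComod_pushforward hm.comodA hπs EA
  · -- act_one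
    intro q
    rcases hπs q with ⟨v, rfl⟩
    rw [EKpt v oneK, hm.modK.act_one]
  · -- act_assoc
    rw [← LinearMap.cancel_right (LinearMap.rTensor_surjective ↥K hπrs)]
    simp only [comp_assoc]
    have s1 : σ'.rTensor ↥K ∘ₗ (π.rTensor ↥K).rTensor ↥K = π.rTensor ↥K ∘ₗ σ.rTensor ↥K := by
      rw [← rTensor_comp, EK, rTensor_comp]
    have s1' := congrArg (fun F => σ' ∘ₗ F) s1
    rw [s1']
    have s2 := congrArg (fun F => F ∘ₗ σ.rTensor ↥K) EK
    simp only [comp_assoc] at s2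
    rw [s2]
    have s3 := congrArg (fun F => π ∘ₗ F) hm.modK.act_assoc
    rw [s3]
    -- now work on the RHS
    have s4 : (TensorProduct.assoc k (V ⧸ W) ↥K ↥K).toLinearMap
          ∘ₗ (π.rTensor ↥K).rTensor ↥K
        = π.rTensor (↥K ⊗[k] ↥K) ∘ₗ (TensorProduct.assoc k V ↥K ↥K).toLinearMap := by
      have := TensorProduct.map_map_comp_assoc_eq (R := k) π
        (LinearMap.id : ↥K →ₗ[k] ↥K) (LinearMap.id : ↥K →ₗ[k] ↥K)
      rw [TensorProduct.map_id] at this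
      exact this.symm
    rw [s4]
    have s5 := congrArg (fun F => F ∘ₗ (TensorProduct.assoc k V ↥K ↥K).toLinearMap)
      (aux_swap π mulK).symm
    simp only [comp_assoc] at s5
    rw [s5]
    have s6 := congrArg (fun F => F ∘ₗ (mulK.lTensor V ∘ₗ (TensorProduct.assoc k V ↥K ↥K).toLinearMap)) EK
    simp only [comp_assoc] at s6
    rw [s6]
  · -- colinearA
    rw [← LinearMap.cancel_right hπs]
    simp only [comp_assoc]
    rw [EA]
    have hdA : diagCoact k S.coact ρH' ∘ₗ π.lTensor A
        = (π.lTensor A).lTensor H ∘ₗ diagCoact k S.coact ρH := by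
      have hid : S.coact ∘ₗ LinearMap.id = (LinearMap.id : A →ₗ[k] A).lTensor H ∘ₗ S.coact := by
        rw [comp_id, lTensor_id, id_comp]
      exact aux_diag_natural S.coact ρH S.coact ρH' LinearMap.id π hid EH
    have hdA' := congrArg (fun F => F ∘ₗ ρA) hdA
    simp only [comp_assoc] at hdA'
    rw [hdA']
    have s2 := congrArg (fun F => (π.lTensor A).lTensor H ∘ₗ F) hm.colinearA
    rw [s2]
    have s3 : ρA'.lTensor H ∘ₗ π.lTensor H = ((π.lTensor A).lTensor H) ∘ₗ ρA.lTensor H := by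
      rw [← lTensor_comp, EA, lTensor_comp]
    have s3' := congrArg (fun F => F ∘ₗ ρH) s3
    simp only [comp_assoc] at s3'
    rw [← s3', EH]
  · -- colinearK
    rw [← LinearMap.cancel_right hπrs]
    simp only [comp_assoc]
    rw [EK]
    have s1 := congrArg (fun F => F ∘ₗ σ) EH
    simp only [comp_assoc] at s1
    rw [s1]
    have s2 := congrArg (fun F => π.lTensor H ∘ₗ F) hm.colinearK
    rw [s2]
    have s3 : σ'.lTensor H ∘ₗ (π.rTensor ↥K).lTensor H = (π ∘ₗ σ).lTensor H := by
      rw [← lTensor_comp, EK]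
    have hdK : diagCoact k ρH' coactK ∘ₗ π.rTensor ↥K
        = (π.rTensor ↥K).lTensor H ∘ₗ diagCoact k ρH coactK := by
      have hid : coactK ∘ₗ LinearMap.id = (LinearMap.id : ↥K →ₗ[k] ↥K).lTensor H ∘ₗ coactK := by
        rw [comp_id, lTensor_id, id_comp]
      exact aux_diag_natural ρH coactK ρH' coactK π LinearMap.id EH hid
    have hdK' := congrArg (fun F => σ'.lTensor H ∘ₗ F) hdK
    rw [hdK']
    have s3' := congrArg (fun F => F ∘ₗ diagCoact k ρH coactK) s3
    simp only [comp_assoc] at s3'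
    rw [s3', lTensor_comp]
    simp only [comp_assoc]
  · -- Klinear
    rw [← LinearMap.cancel_right hπrs]
    simp only [comp_assoc]
    rw [EK]
    have s1 := congrArg (fun F => F ∘ₗ σ) EA
    simp only [comp_assoc] at s1
    rw [s1]
    have s2 := congrArg (fun F => π.lTensor A ∘ₗ F) hm.Klinear
    rw [s2]
    have s3 : ρA'.rTensor ↥K ∘ₗ π.rTensor ↥K = (π.lTensor A).rTensor ↥K ∘ₗ ρA.rTensor ↥K := by
      rw [← rTensor_comp, EA, rTensor_comp]
    have s3' := congrArg (fun F => halfBraidedAction k S.mul S.act ρH' σ' comulK ∘ₗ F) s3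
    rw [s3']
    have s4 := congrArg (fun F => F ∘ₗ ρA.rTensor ↥K)
      (aux_hba_natural S.mul S.act comulK ρH ρH' σ σ' π EH EK)
    simp only [comp_assoc] at s4
    rw [s4]
end Aux7
/-- Over a cosemisimple Hopf algebra `H`: if every non-zero Hopf module
in `^A(^H 𝓜)_K` contains a non-zero Hopf submodule which is `K`-free in left
`H`-comodules, then every Hopf module in `^A(^H 𝓜)_K` is `K`-free in left
`H`-comodules. -/
theorem all_hopfModules_KFree_of_local_freeness
    {k H A : Type u} [Field k] [Ring H] [HopfAlgebra k H]
    [AddCommGroup A] [Module k A] (S : BHA k H A)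
    (hbij : Function.Bijective (HopfAlgebra.antipode (R := k) (A := H)))
    (hcss : CosemisimpleCoalg k (Coalgebra.comul (R := k) (A := H))
      (Coalgebra.counit (R := k) (A := H)))
    (K : Submodule k A) (hK : S.IsLeftCoidealSubalgebra K)
    (mulK : ↥K ⊗[k] ↥K →ₗ[k] ↥K) (hmulK : S.RestrictsMul K mulK)
    (oneK : ↥K) (honeK : (oneK : A) = S.one)
    (comulK : ↥K →ₗ[k] A ⊗[k] ↥K) (hcomulK : S.RestrictsComul K comulK)
    (coactK : ↥K →ₗ[k] H ⊗[k] ↥K) (hcoactK : S.RestrictsCoact K coactK)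
    -- every non-zero Hopf module contains a non-zero `K`-free Hopf submodule:
    (hloc : ∀ (V : Type u) [AddCommGroup V] [Module k V]
      (ρH : V →ₗ[k] H ⊗[k] V) (ρA : V →ₗ[k] A ⊗[k] V) (σ : V ⊗[k] ↥K →ₗ[k] V),
      S.IsHopfModule K mulK oneK comulK coactK ρH ρA σ → Nontrivial V →
      ∃ W : Submodule k V, W ≠ ⊥ ∧ IsSubcomod k ρH W ∧ IsSubcomod k ρA W ∧
        (∀ w ∈ W, ∀ c : ↥K, σ (w ⊗ₜ c) ∈ W) ∧
        ∃ X : Submodule k V, X ≤ W ∧ IsSubcomod k ρH X ∧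
          Function.Injective (σ ∘ₗ X.subtype.rTensor ↥K) ∧
          LinearMap.range (σ ∘ₗ X.subtype.rTensor ↥K) = W) :
    -- then every Hopf module is `K`-free in left `H`-comodules:
    ∀ (V : Type u) [AddCommGroup V] [Module k V]
      (ρH : V →ₗ[k] H ⊗[k] V) (ρA : V →ₗ[k] A ⊗[k] V) (σ : V ⊗[k] ↥K →ₗ[k] V),
      S.IsHopfModule K mulK oneK comulK coactK ρH ρA σ →
      BHA.IsKFree K ρH σ := by
  intro V _ _ ρH ρA σ hm
  classical
  set s : Set (Submodule k V) := {X | IsSubcomod k ρH X ∧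
    Function.Injective (σ ∘ₗ X.subtype.rTensor ↥K) ∧
    IsSubcomod k ρH (range (σ ∘ₗ X.subtype.rTensor ↥K)) ∧
    IsSubcomod k ρA (range (σ ∘ₗ X.subtype.rTensor ↥K)) ∧
    ∀ w ∈ range (σ ∘ₗ X.subtype.rTensor ↥K), ∀ c : ↥K,
      σ (w ⊗ₜ c) ∈ range (σ ∘ₗ X.subtype.rTensor ↥K)} with hs
  -- basic helpers
  have h_incl : ∀ {X X' : Submodule k V} (h : X ≤ X'),
      (σ ∘ₗ X'.subtype.rTensor ↥K) ∘ₗ (Submodule.inclusion h).rTensor ↥K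
        = σ ∘ₗ X.subtype.rTensor ↥K := by
    intro X X' h
    rw [comp_assoc, ← rTensor_comp, Submodule.subtype_comp_inclusion]
  have h_mono : ∀ {X X' : Submodule k V}, X ≤ X' →
      range (σ ∘ₗ X.subtype.rTensor ↥K) ≤ range (σ ∘ₗ X'.subtype.rTensor ↥K) := by
    intro X X' h
    rw [← h_incl h]
    exact range_comp_le_range _ _
  have h_pure : ∀ (X : Submodule k V) (x : V) (hx : x ∈ X) (c : ↥K),
      σ (x ⊗ₜ c) ∈ range (σ ∘ₗ X.subtype.rTensor ↥K) := by
    intro X x hx c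
    exact ⟨(⟨x, hx⟩ : ↥X) ⊗ₜ c, by simp⟩
  have h_leW : ∀ X : Submodule k V, X ≤ range (σ ∘ₗ X.subtype.rTensor ↥K) := by
    intro X x hx
    have := h_pure X x hx oneK
    rwa [hm.modK.act_one] at this
  -- the bottom submodule is in `s`
  have h_bot : (⊥ : Submodule k V) ∈ s := by
    have hzero : ∀ t : (↥(⊥ : Submodule k V)) ⊗[k] ↥K,
        (σ ∘ₗ (⊥ : Submodule k V).subtype.rTensor ↥K) t = 0 := by
      intro t
      rw [aux_tensor_bot_eq_zero t, map_zero]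
    have hrange : range (σ ∘ₗ (⊥ : Submodule k V).subtype.rTensor ↥K) = ⊥ := by
      apply le_bot_iff.1
      rintro y ⟨t, rfl⟩
      rw [hzero t]
      exact Submodule.zero_mem ⊥
    refine ⟨aux_isSubcomod_bot ρH, ?_, ?_, ?_, ?_⟩
    · intro t t' _
      rw [aux_tensor_bot_eq_zero t, aux_tensor_bot_eq_zero t']
    · rw [hrange]; exact aux_isSubcomod_bot ρH
    · rw [hrange]; exact aux_isSubcomod_bot ρA
    · rw [hrange]
      intro w hw c
      rw [Submodule.mem_bot] at hw
      subst hw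
      rw [TensorProduct.zero_tmul, map_zero]
      exact Submodule.zero_mem ⊥
  -- chains have upper bounds in `s`
  have h_chain : ∀ c ⊆ s, IsChain (· ≤ ·) c → ∃ ub ∈ s, ∀ z ∈ c, z ≤ ub := by
    intro c hcs hchain
    rcases Set.eq_empty_or_nonempty c with rfl | hne
    · exact ⟨⊥, h_bot, by simp⟩
    refine ⟨sSup c, ?_, fun z hz => le_sSup hz⟩
    have hdir : DirectedOn (· ≤ ·) c := hchain.directedOn
    have hmem : ∀ x : V, x ∈ sSup c → ∃ Y ∈ c, x ∈ Y := by
      intro x hx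
      exact (Submodule.mem_sSup_of_directed hne hdir).1 hx
    -- a finite set of elements of `sSup c` lies in a single member of the chain
    have hfin : ∀ T : Finset (↥(sSup c) × ↥K), ∃ Y, Y ∈ c ∧ ∀ p ∈ T, ((p.1 : ↥(sSup c)) : V) ∈ Y := by
      intro T
      induction T using Finset.induction_on with
      | empty => exact ⟨hne.choose, hne.choose_spec, by simp⟩
      | @insert a T' ha ih =>
        obtain ⟨Y, hYc, hY⟩ := ih
        obtain ⟨Z, hZc, haZ⟩ := hmem _ a.1.2
        rcases hchain.total hYc hZc with h | h
        · exact ⟨Z, hZc, by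
            intro p hp
            rcases Finset.mem_insert.1 hp with rfl | hp
            · exact haZ
            · exact h (hY p hp)⟩
        · exact ⟨Y, hYc, by
            intro p hp
            rcases Finset.mem_insert.1 hp with rfl | hp
            · exact h haZ
            · exact hY p hp⟩
    -- every element of `↥(sSup c) ⊗ K` comes from a member of the chain
    have hdec : ∀ t : ↥(sSup c) ⊗[k] ↥K, ∃ Y, ∃ hY : Y ∈ c, ∃ t' : ↥Y ⊗[k] ↥K,
        (Submodule.inclusion (le_sSup hY)).rTensor ↥K t' = t := by
      intro t
      obtain ⟨T, rfl⟩ := TensorProduct.exists_finset t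
      obtain ⟨Y, hYc, hY⟩ := hfin T
      refine ⟨Y, hYc, T.attach.sum (fun p => (⟨(p.1.1 : V), hY p.1 p.2⟩ : ↥Y) ⊗ₜ p.1.2), ?_⟩
      rw [map_sum, ← Finset.sum_attach T (fun p => p.1 ⊗ₜ[k] p.2)]
      apply Finset.sum_congr rfl
      intro p _
      rw [rTensor_tmul]
      congr 1
    have hsub : IsSubcomod k ρH (sSup c) := by
      intro x hx
      obtain ⟨Y, hYc, hxY⟩ := hmem x hx
      exact aux_range_lT_mono (le_sSup hYc) H ((hcs hYc).1 x hxY)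
    have hWmem : ∀ w ∈ range (σ ∘ₗ (sSup c).subtype.rTensor ↥K),
        ∃ Y, ∃ _ : Y ∈ c, w ∈ range (σ ∘ₗ Y.subtype.rTensor ↥K) := by
      rintro w ⟨t, rfl⟩
      obtain ⟨Y, hYc, t', rfl⟩ := hdec t
      refine ⟨Y, hYc, t', ?_⟩
      have := LinearMap.congr_fun (h_incl (le_sSup hYc)) t'
      simpa using this.symm
    refine ⟨hsub, ?_, ?_, ?_, ?_⟩
    · rw [← ker_eq_bot, ker_eq_bot']
      intro t ht
      obtain ⟨Y, hYc, t', rfl⟩ := hdec t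
      have ht' : (σ ∘ₗ Y.subtype.rTensor ↥K) t' = 0 := by
        rw [← h_incl (le_sSup hYc)]
        exact ht
      have : t' = 0 := by
        apply (hcs hYc).2.1
        rw [ht', map_zero]
      rw [this, map_zero]
    · intro w hw
      obtain ⟨Y, hYc, hwY⟩ := hWmem w hw
      exact aux_range_lT_mono (h_mono (le_sSup hYc)) H ((hcs hYc).2.2.1 w hwY)
    · intro w hw
      obtain ⟨Y, hYc, hwY⟩ := hWmem w hw
      exact aux_range_lT_mono (h_mono (le_sSup hYc)) A ((hcs hYc).2.2.2.1 w hwY)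
    · intro w hw c'
      obtain ⟨Y, hYc, hwY⟩ := hWmem w hw
      exact h_mono (le_sSup hYc) ((hcs hYc).2.2.2.2 w hwY c')
  obtain ⟨X₀, hX₀⟩ := zorn_le₀ s h_chain
  have hX₀s : X₀ ∈ s := hX₀.1
  obtain ⟨hX₀H, hX₀inj, hW₀H, hW₀A, hW₀K⟩ := hX₀s
  set W₀ : Submodule k V := range (σ ∘ₗ X₀.subtype.rTensor ↥K) with hW₀
  -- main claim : W₀ = ⊤
  have htop : W₀ = ⊤ := by
    by_contra hne
    -- build the quotient Hopf module
    obtain ⟨ρH', ρA', σ', hm', EH, EA, EK⟩ :=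
      aux_quotient_hopf S K mulK oneK comulK coactK ρH ρA σ hm W₀ hW₀H hW₀A hW₀K
    have hnt : Nontrivial (V ⧸ W₀) := Submodule.Quotient.nontrivial_iff.mpr hne
    obtain ⟨W₁, hW₁ne, hW₁H, hW₁A, hW₁K, X₁, hX₁le, hX₁H, hX₁inj, hX₁range⟩ :=
      hloc (V ⧸ W₀) ρH' ρA' σ' hm' hnt
    set π := W₀.mkQ with hπ
    have EKpt : ∀ (v : V) (c : ↥K), σ' (π v ⊗ₜ c) = π (σ (v ⊗ₜ c)) := by
      intro v c
      have := LinearMap.congr_fun EK (v ⊗ₜ c)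
      simpa using this
    -- X₁ is nonzero
    have hX₁ne : X₁ ≠ ⊥ := by
      intro hbotX
      apply hW₁ne
      rw [← hX₁range]
      apply le_bot_iff.1
      rintro y ⟨t, rfl⟩
      have : t = 0 := by
        subst hbotX
        exact aux_tensor_bot_eq_zero t
      rw [this, map_zero]
      exact Submodule.zero_mem ⊥
    -- the preimage of X₁ and its H-comodule complement of W₀
    set P₁ : Submodule k V := X₁.comap π with hP₁def
    have hP₁H : IsSubcomod k ρH P₁ := aux_isSubcomod_comap EH hX₁H
    have hW₀P₁ : W₀ ≤ P₁ := by
      intro w hw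
      show π w ∈ X₁
      have : π w = 0 := by rw [hπ, Submodule.mkQ_apply, Submodule.Quotient.mk_eq_zero]; exact hw
      rw [this]
      exact X₁.zero_mem
    have hspecP : P₁.subtype.lTensor H ∘ₗ auxRestrict ρH P₁ hP₁H = ρH ∘ₗ P₁.subtype :=
      auxRestrict_spec ρH P₁ hP₁H
    have hW₀'sub : IsSubcomod k (auxRestrict ρH P₁ hP₁H) (W₀.comap P₁.subtype) :=
      aux_isSubcomod_comap hspecP.symm hW₀H
    obtain ⟨Cc, hCompl, hCcH⟩ := hcss ↥P₁ (auxRestrict ρH P₁ hP₁H)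
      (aux_isComod_restrict hm.comodH P₁ hP₁H) (W₀.comap P₁.subtype) hW₀'sub
    set Xt : Submodule k V := Cc.map P₁.subtype with hXtdef
    have hXtH : IsSubcomod k ρH Xt := aux_isSubcomod_map_subtype hP₁H hCcH
    have hdisj : ∀ v : V, v ∈ W₀ → v ∈ Xt → v = 0 := by
      intro v hvW hvX
      rcases hvX with ⟨c', hc', rfl⟩
      have hmem : c' ∈ (W₀.comap P₁.subtype) ⊓ Cc := ⟨hvW, hc'⟩
      rw [hCompl.inf_eq_bot, Submodule.mem_bot] at hmem
      rw [hmem]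
      simp
    have hsup : W₀ ⊔ Xt = P₁ := by
      have h1 : (W₀.comap P₁.subtype) ⊔ Cc = ⊤ := hCompl.sup_eq_top
      have h2 := congrArg (Submodule.map P₁.subtype) h1
      rw [Submodule.map_sup, Submodule.map_comap_subtype, Submodule.map_subtype_top,
        inf_eq_right.mpr hW₀P₁] at h2
      exact h2
    have hmapP₁ : P₁.map π = X₁ := by
      rw [hP₁def, Submodule.map_comap_eq, Submodule.range_mkQ, top_inf_eq]
    have hmapW₀ : W₀.map π = ⊥ := by
      apply le_bot_iff.1
      rintro y ⟨w, hw, rfl⟩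
      rw [Submodule.mem_bot, hπ, Submodule.mkQ_apply, Submodule.Quotient.mk_eq_zero]
      exact hw
    have hmapXt : Xt.map π = X₁ := by
      have := congrArg (Submodule.map π) hsup
      rw [Submodule.map_sup, hmapW₀, bot_sup_eq, hmapP₁] at this
      exact this
    -- the H-colinear isomorphism between Xt and X₁
    have hcod : ∀ x : ↥Xt, (π ∘ₗ Xt.subtype) x ∈ X₁ := by
      intro x
      rw [← hmapXt]
      exact Submodule.mem_map_of_mem x.2
    set f₀ : ↥Xt →ₗ[k] ↥X₁ := (π ∘ₗ Xt.subtype).codRestrict X₁ hcod with hf₀def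
    have hf₀coe : ∀ x : ↥Xt, (f₀ x : V ⧸ W₀) = π (x : V) := fun x => rfl
    have hf₀inj : Function.Injective f₀ := by
      intro x y hxy
      have h1 : π (x : V) = π (y : V) := by
        rw [← hf₀coe, ← hf₀coe, hxy]
      have h2 : (x : V) - (y : V) ∈ W₀ := by
        rw [← Submodule.Quotient.eq]
        exact h1
      have h3 : (x : V) - (y : V) ∈ Xt := Xt.sub_mem x.2 y.2
      have := hdisj _ h2 h3
      exact Subtype.ext (by rw [← sub_eq_zero]; exact this)
    have hf₀surj : Function.Surjective f₀ := by
      intro y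
      have : (y : V ⧸ W₀) ∈ Xt.map π := by rw [hmapXt]; exact y.2
      rcases this with ⟨x, hx, hxy⟩
      exact ⟨⟨x, hx⟩, Subtype.ext hxy⟩
    -- the new generating subcomodule
    set Xnew : Submodule k V := X₀ ⊔ Xt with hXnewdef
    set g := σ ∘ₗ Xnew.subtype.rTensor ↥K with hgdef
    set g₀ := σ ∘ₗ X₀.subtype.rTensor ↥K with hg₀def
    set gt := σ ∘ₗ Xt.subtype.rTensor ↥K with hgtdef
    set j₀ := (Submodule.inclusion (le_sup_left : X₀ ≤ Xnew)).rTensor ↥K with hj₀def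
    set jt := (Submodule.inclusion (le_sup_right : Xt ≤ Xnew)).rTensor ↥K with hjtdef
    have hgj₀ : ∀ t₀, g (j₀ t₀) = g₀ t₀ := by
      intro t₀
      have := LinearMap.congr_fun (h_incl (le_sup_left : X₀ ≤ Xnew)) t₀
      exact this
    have hgjt : ∀ t₁, g (jt t₁) = gt t₁ := by
      intro t₁
      have := LinearMap.congr_fun (h_incl (le_sup_right : Xt ≤ Xnew)) t₁
      exact this
    have hdecomp : ∀ t : ↥Xnew ⊗[k] ↥K, ∃ t₀ t₁, t = j₀ t₀ + jt t₁ := by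
      intro t
      induction t with
      | zero => exact ⟨0, 0, by simp⟩
      | tmul x c =>
        rcases Submodule.mem_sup.1 (show ((x : ↥Xnew) : V) ∈ X₀ ⊔ Xt from x.2) with ⟨a, ha, b, hb, hab⟩
        refine ⟨(⟨a, ha⟩ : ↥X₀) ⊗ₜ c, (⟨b, hb⟩ : ↥Xt) ⊗ₜ c, ?_⟩
        rw [hj₀def, hjtdef, rTensor_tmul, rTensor_tmul, ← TensorProduct.add_tmul]
        congr 1
        apply Subtype.ext
        exact hab.symm
      | add t t' iht iht' =>
        rcases iht with ⟨t₀, t₁, rfl⟩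
        rcases iht' with ⟨t₀', t₁', rfl⟩
        exact ⟨t₀ + t₀', t₁ + t₁', by rw [map_add, map_add]; abel⟩
    -- π ∘ gt factors through σ' via the isomorphism f₀
    have hcommt : π ∘ₗ gt = (σ' ∘ₗ X₁.subtype.rTensor ↥K) ∘ₗ f₀.rTensor ↥K := by
      apply TensorProduct.ext'
      intro x c
      simp only [coe_comp, Function.comp_apply, rTensor_tmul, Submodule.coe_subtype, hgtdef]
      rw [hf₀coe, EKpt]
    have hcommtpt : ∀ t₁, π (gt t₁) = σ' ((X₁.subtype.rTensor ↥K) ((f₀.rTensor ↥K) t₁)) := by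
      intro t₁
      have := LinearMap.congr_fun hcommt t₁
      simpa using this
    have hf₀rinj : Function.Injective (f₀.rTensor ↥K) :=
      Module.Flat.rTensor_preserves_injective_linearMap f₀ hf₀inj
    have hf₀rsurj : Function.Surjective (f₀.rTensor ↥K) :=
      LinearMap.rTensor_surjective ↥K hf₀surj
    have hg₀W₀ : ∀ t₀, g₀ t₀ ∈ W₀ := fun t₀ => ⟨t₀, rfl⟩
    -- injectivity of the new action map
    have hginj : Function.Injective g := by
      rw [← ker_eq_bot, ker_eq_bot']
      intro t ht
      rcases hdecomp t with ⟨t₀, t₁, rfl⟩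
      rw [map_add, hgj₀, hgjt] at ht
      have hπ0 : σ' ((X₁.subtype.rTensor ↥K) ((f₀.rTensor ↥K) t₁)) = 0 := by
        have h1 : π (g₀ t₀ + gt t₁) = 0 := by rw [ht, map_zero]
        have h2 : π (g₀ t₀) = 0 := by
          rw [hπ, Submodule.mkQ_apply, Submodule.Quotient.mk_eq_zero]
          exact hg₀W₀ t₀
        rw [map_add, h2, zero_add, hcommtpt] at h1
        exact h1
      have ht₁ : t₁ = 0 := by
        apply hf₀rinj
        rw [map_zero]
        apply hX₁inj
        rw [map_zero]
        exact hπ0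
      subst ht₁
      rw [map_zero, add_zero] at ht
      have ht₀ : t₀ = 0 := by
        apply hX₀inj
        rw [map_zero]
        exact ht
      subst ht₀
      simp
    -- the range of the new action map
    have hrange : range g = W₁.comap π := by
      apply le_antisymm
      · rintro y ⟨t, rfl⟩
        rcases hdecomp t with ⟨t₀, t₁, rfl⟩
        rw [map_add, hgj₀, hgjt]
        show π (g₀ t₀ + gt t₁) ∈ W₁
        rw [map_add]
        have h2 : π (g₀ t₀) = 0 := by
          rw [hπ, Submodule.mkQ_apply, Submodule.Quotient.mk_eq_zero]
          exact hg₀W₀ t₀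
        rw [h2, zero_add, hcommtpt]
        rw [← hX₁range]
        exact ⟨(f₀.rTensor ↥K) t₁, rfl⟩
      · intro v hv
        have : π v ∈ range (σ' ∘ₗ X₁.subtype.rTensor ↥K) := by
          rw [hX₁range]
          exact hv
        rcases this with ⟨s₁, hs₁⟩
        rcases hf₀rsurj s₁ with ⟨t₁, rfl⟩
        have hvt : v - gt t₁ ∈ W₀ := by
          rw [← Submodule.Quotient.eq]
          show π v = π (gt t₁)
          rw [hcommtpt]
          exact hs₁.symm.trans rfl
        rcases hvt with ⟨t₀, ht₀⟩
        refine ⟨j₀ t₀ + jt t₁, ?_⟩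
        rw [map_add, hgj₀, hgjt, ht₀]
        abel
    -- Xnew is in s
    have hXnews : Xnew ∈ s := by
      refine ⟨aux_isSubcomod_sup hX₀H hXtH, hginj, ?_, ?_, ?_⟩
      · rw [← hgdef, hrange]
        exact aux_isSubcomod_comap EH hW₁H
      · rw [← hgdef, hrange]
        exact aux_isSubcomod_comap EA hW₁A
      · rw [← hgdef, hrange]
        intro w hw c
        show π (σ (w ⊗ₜ c)) ∈ W₁
        rw [← EKpt]
        exact hW₁K (π w) hw c
    -- contradiction with maximality
    have hXnewle : Xnew ≤ X₀ := hX₀.2 hXnews le_sup_left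
    have hXtne : Xt ≠ ⊥ := by
      intro hb
      apply hX₁ne
      rw [← hmapXt, hb, Submodule.map_bot]
    rcases Submodule.exists_mem_ne_zero_of_ne_bot hXtne with ⟨x, hxXt, hx0⟩
    have hxX₀ : x ∈ X₀ := hXnewle ((le_sup_right : Xt ≤ Xnew) hxXt)
    have hxW₀ : x ∈ W₀ := h_leW X₀ hxX₀
    exact hx0 (hdisj x hxW₀ hxXt)
  exact ⟨X₀, hX₀H, hX₀inj, by rw [← range_eq_top, ← hW₀]; exact htop⟩
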